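/- For fixed vectors v⃗, w⃗ ∈ ℝ³, the gradient with respect to the 4-vector 𝐪 of the scalar vᵀ R(𝐪) w, where R(𝐪) = E(𝐪)G(𝐪)ᵀ, equals 2 Δ[v⃗,w⃗] 𝐪, where Δ[v⃗,w⃗] is the symmetric 4×4 matrix with block form [[w⃗·v⃗, (w⃗×v⃗)ᵀ],[w⃗×v⃗, w⃗v⃗ᵀ + v⃗w⃗ᵀ − (w⃗·v⃗)I₃]]. -/

import Mathlib

set_option maxHeartbeats 800000


open Matrix

/-- The 3×4 matrix E built from the components of a coordinate 4-vector. -/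
def Emat4 (q : Fin 4 → ℝ) : Matrix (Fin 3) (Fin 4) ℝ :=
  !![-q 1, q 0, -q 3, q 2;
     -q 2, q 3, q 0, -q 1;
     -q 3, -q 2, q 1, q 0]

/-- The 3×4 matrix G built from the components of a coordinate 4-vector. -/
def Gmat4 (q : Fin 4 → ℝ) : Matrix (Fin 3) (Fin 4) ℝ :=
  !![-q 1, q 0, q 3, -q 2;
     -q 2, -q 3, q 0, q 1;
     -q 3, q 2, -q 1, q 0]

/-- The symmetric 4×4 matrix Δ[v,w] with block form
    [[w·v, (w×v)ᵀ], [w×v, wvᵀ + vwᵀ − (w·v)I₃]]. -/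
def Delta (v w : Fin 3 → ℝ) : Matrix (Fin 4) (Fin 4) ℝ :=
  !![w ⬝ᵥ v, crossProduct w v 0, crossProduct w v 1, crossProduct w v 2;
     crossProduct w v 0, w 0 * v 0 + v 0 * w 0 - w ⬝ᵥ v,
       w 0 * v 1 + v 0 * w 1, w 0 * v 2 + v 0 * w 2;
     crossProduct w v 1, w 1 * v 0 + v 1 * w 0,
       w 1 * v 1 + v 1 * w 1 - w ⬝ᵥ v, w 1 * v 2 + v 1 * w 2;
     crossProduct w v 2, w 2 * v 0 + v 2 * w 0,
       w 2 * v 1 + v 2 * w 1, w 2 * v 2 + v 2 * w 2 - w ⬝ᵥ v]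

lemma hasFDeriv_quad (M : Matrix (Fin 4) (Fin 4) ℝ) (q : Fin 4 → ℝ) :
    HasFDerivAt (fun p : Fin 4 → ℝ => p ⬝ᵥ (M *ᵥ p))
      (∑ i, ∑ j, M i j • (q i • (ContinuousLinearMap.proj j : (Fin 4 → ℝ) →L[ℝ] ℝ)
        + q j • (ContinuousLinearMap.proj i : (Fin 4 → ℝ) →L[ℝ] ℝ))) q := by
  have h : (fun p : Fin 4 → ℝ => p ⬝ᵥ (M *ᵥ p))
      = fun p => ∑ i, ∑ j, M i j * (p i * p j) := by
    funext p
    simp only [dotProduct, mulVec, Finset.mul_sum]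
    congr 1; funext i; congr 1; funext j; ring
  rw [h]
  apply HasFDerivAt.fun_sum; intro i _
  apply HasFDerivAt.fun_sum; intro j _
  have hi : HasFDerivAt (fun p : Fin 4 → ℝ => p i)
      (ContinuousLinearMap.proj i : (Fin 4 → ℝ) →L[ℝ] ℝ) q :=
    (ContinuousLinearMap.proj (R := ℝ) (φ := fun _ : Fin 4 => ℝ) i).hasFDerivAt
  have hj : HasFDerivAt (fun p : Fin 4 → ℝ => p j)
      (ContinuousLinearMap.proj j : (Fin 4 → ℝ) →L[ℝ] ℝ) q :=
    (ContinuousLinearMap.proj (R := ℝ) (φ := fun _ : Fin 4 => ℝ) j).hasFDerivAt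
  exact (hi.mul hj).const_mul (M i j)

theorem grad_quadratic_form_single_R (v w : Fin 3 → ℝ) (q : Fin 4 → ℝ) :
    (fun i => fderiv ℝ (fun p : Fin 4 → ℝ =>
        v ⬝ᵥ ((Emat4 p * (Gmat4 p)ᵀ) *ᵥ w)) q (Pi.single i 1)) =
      (2 : ℝ) • (Delta v w *ᵥ q) := by
  have hf : (fun p : Fin 4 → ℝ => v ⬝ᵥ ((Emat4 p * (Gmat4 p)ᵀ) *ᵥ w))
      = fun p => p ⬝ᵥ (Delta v w *ᵥ p) := by
    funext p
    simp [Emat4, Gmat4, Delta, mul_apply, mulVec, dotProduct, Matrix.transpose_apply,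
      Fin.sum_univ_four, Fin.sum_univ_three, crossProduct, Matrix.vecHead, Matrix.vecTail, Function.comp]
    ring
  rw [hf, (hasFDeriv_quad (Delta v w) q).fderiv]
  funext i
  fin_cases i <;>
  · simp only [ContinuousLinearMap.coe_sum', Finset.sum_apply,
      ContinuousLinearMap.add_apply, ContinuousLinearMap.smul_apply,
      ContinuousLinearMap.proj_apply, smul_eq_mul, Fin.sum_univ_four,
      Pi.single_apply, Pi.smul_apply]
    simp [Delta, mulVec, dotProduct, crossProduct, Fin.sum_univ_four,
      Fin.sum_univ_three]
    ring
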